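/- Let η₁, η₂, …, η_n (n ≥ 2) be independent, identically distributed real-valued random variables whose common distribution is atomless, and for 2 ≤ i ≤ n let B_i = I(η_i < min(η₁, …, η_{i−1})). Then for every 2 ≤ i ≤ n the conditional entropy H(B_i | B₂, …, B_{i−1}) equals π(i−1) := −((i−1)/i)·log((i−1)/i) − (1/i)·log(1/i). -/

import Mathlib

open MeasureTheory ProbabilityTheory
open scoped ENNReal Classical

/-- Shannon entropy of a finitely-valued random variable `X`:
`H(X) = −Σ_s p(s) log p(s)` (natural logarithm), with the convention `0 · log 0 = 0`. -/
noncomputable def shannonEntropy {Ω S : Type*} [MeasurableSpace Ω] [Fintype S]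
    (μ : Measure Ω) (X : Ω → S) : ℝ :=
  -∑ s : S, (μ (X ⁻¹' {s})).toReal * Real.log (μ (X ⁻¹' {s})).toReal

/-- Conditional Shannon entropy of finitely-valued random variables:
`H(X | Y) = −Σ_{s,t} p(s,t) log (p(s,t) / p(t))`, with the convention that terms with
`p(s,t) = 0` vanish.  Conditioning on an empty tuple gives the unconditional entropy. -/
noncomputable def condEntropy {Ω S T : Type*} [MeasurableSpace Ω] [Fintype S] [Fintype T]
    (μ : Measure Ω) (X : Ω → S) (Y : Ω → T) : ℝ :=
  -∑ s : S, ∑ t : T,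
    (μ (X ⁻¹' {s} ∩ Y ⁻¹' {t})).toReal *
      Real.log ((μ (X ⁻¹' {s} ∩ Y ⁻¹' {t})).toReal / (μ (Y ⁻¹' {t})).toReal)

/-- The record indicator `B_i = I(η_i < min(η₁, …, η_{i−1}))`, as a `{0,1}`-valued
(`Fin 2`-valued) random variable: `B_i = 1` exactly when the `i`-th sample is strictly
smaller than all previous samples (indices `1, …, i−1`). -/
noncomputable def recordInd {Ω : Type*} (η : ℕ → Ω → ℝ) (i : ℕ) (ω : Ω) : Fin 2 :=
  if η i ω < sInf ((fun j => η j ω) '' {j | 1 ≤ j ∧ j < i}) then 1 else 0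

/-- `π(g) = −(g/(g+1))·log(g/(g+1)) − (1/(g+1))·log(1/(g+1))`, the binary entropy of
`1/(g+1)` (natural logarithm). -/
noncomputable def piFun (g : ℕ) : ℝ :=
  -((g / (g + 1) : ℝ) * Real.log ((g : ℝ) / (g + 1)))
    - (1 / ((g : ℝ) + 1)) * Real.log (1 / ((g : ℝ) + 1))


namespace RecordAux

/-- lower-bound set with possibly trivial (`⊥`) bound -/
def Sset (c : WithBot ℝ) : Set ℝ := {x : ℝ | c < (x : WithBot ℝ)}

lemma Sset_bot : Sset ⊥ = Set.univ := by
  ext x; simp [Sset, WithBot.bot_lt_coe]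

lemma Sset_coe (y : ℝ) : Sset (y : WithBot ℝ) = Set.Ioi y := by
  ext x; simp [Sset, WithBot.coe_lt_coe, Set.mem_Ioi]

lemma measurableSet_Sset (c : WithBot ℝ) : MeasurableSet (Sset c) := by
  cases c with
  | bot => rw [Sset_bot]; exact MeasurableSet.univ
  | coe r => rw [Sset_coe]; exact measurableSet_Ioi

variable (ν : Measure ℝ)

/-- survival function -/
noncomputable def G (c : WithBot ℝ) : ℝ≥0∞ := ν (Sset c)

lemma measurable_G_coe : Measurable (fun y : ℝ => G ν (y : WithBot ℝ)) := by
  have : ∀ y : ℝ, G ν (y : WithBot ℝ) = ν (Set.Ioi y) := fun y => by rw [G, Sset_coe]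
  simp only [this]
  exact Antitone.measurable (fun y y' h => measure_mono (fun x hx => lt_of_le_of_lt h hx))

/-- pi measure with m i.i.d. coordinates -/
noncomputable def pm (m : ℕ) : Measure (Fin m → ℝ) := Measure.pi (fun _ => ν)

end RecordAux

namespace RecordAux

variable (ν : Measure ℝ)

instance (m : ℕ) [IsProbabilityMeasure ν] : IsProbabilityMeasure (pm ν m) := by
  unfold pm; infer_instance

/-- the record-pattern event with a lower bound `c` on all coordinates.
Coordinate `j : Fin m` represents sample number `j+1`. -/
def Ebox (m : ℕ) (c : WithBot ℝ) (b : ℕ → Fin 2) : Set (Fin m → ℝ) :=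
  {x | (∀ j, c < (x j : WithBot ℝ)) ∧
    ∀ k : Fin m, 1 ≤ (k : ℕ) →
      ((∀ j : Fin m, (j : ℕ) < (k : ℕ) → x k < x j) ↔ b ((k : ℕ) + 1) = 1)}

lemma measurableSet_rec {m : ℕ} (k : Fin m) :
    MeasurableSet {x : Fin m → ℝ | ∀ j : Fin m, (j : ℕ) < (k : ℕ) → x k < x j} := by
  have : {x : Fin m → ℝ | ∀ j : Fin m, (j : ℕ) < (k : ℕ) → x k < x j}
      = ⋂ j : Fin m, ⋂ (_ : (j : ℕ) < (k : ℕ)), {x : Fin m → ℝ | x k < x j} := by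
    ext x; simp
  rw [this]
  exact MeasurableSet.iInter fun j => MeasurableSet.iInter fun _ =>
    measurableSet_lt (measurable_pi_apply k) (measurable_pi_apply j)

lemma measurableSet_Ebox (m : ℕ) (c : WithBot ℝ) (b : ℕ → Fin 2) :
    MeasurableSet (Ebox m c b) := by
  have h1 : MeasurableSet {x : Fin m → ℝ | ∀ j, c < (x j : WithBot ℝ)} := by
    have : {x : Fin m → ℝ | ∀ j, c < (x j : WithBot ℝ)} = Set.pi Set.univ (fun _ => Sset c) := by
      ext x; simp [Sset, Set.mem_pi]
    rw [this]
    exact MeasurableSet.univ_pi fun _ => measurableSet_Sset c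
  have h2 : ∀ k : Fin m, MeasurableSet {x : Fin m → ℝ | 1 ≤ (k : ℕ) →
      ((∀ j : Fin m, (j : ℕ) < (k : ℕ) → x k < x j) ↔ b ((k : ℕ) + 1) = 1)} := by
    intro k
    by_cases hk : 1 ≤ (k : ℕ)
    · by_cases hb : b ((k : ℕ) + 1) = 1
      · have : {x : Fin m → ℝ | 1 ≤ (k : ℕ) →
            ((∀ j : Fin m, (j : ℕ) < (k : ℕ) → x k < x j) ↔ b ((k : ℕ) + 1) = 1)}
            = {x : Fin m → ℝ | ∀ j : Fin m, (j : ℕ) < (k : ℕ) → x k < x j} := by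
          ext x; simp [hk, hb]
        rw [this]; exact measurableSet_rec k
      · have : {x : Fin m → ℝ | 1 ≤ (k : ℕ) →
            ((∀ j : Fin m, (j : ℕ) < (k : ℕ) → x k < x j) ↔ b ((k : ℕ) + 1) = 1)}
            = {x : Fin m → ℝ | ∀ j : Fin m, (j : ℕ) < (k : ℕ) → x k < x j}ᶜ := by
          ext x; simp [hk, hb]
        rw [this]; exact (measurableSet_rec k).compl
    · have : {x : Fin m → ℝ | 1 ≤ (k : ℕ) →
          ((∀ j : Fin m, (j : ℕ) < (k : ℕ) → x k < x j) ↔ b ((k : ℕ) + 1) = 1)} = Set.univ := by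
        ext x; simp [hk]
      rw [this]; exact MeasurableSet.univ
  have : Ebox m c b = {x : Fin m → ℝ | ∀ j, c < (x j : WithBot ℝ)} ∩
      ⋂ k : Fin m, {x : Fin m → ℝ | 1 ≤ (k : ℕ) →
        ((∀ j : Fin m, (j : ℕ) < (k : ℕ) → x k < x j) ↔ b ((k : ℕ) + 1) = 1)} := by
    ext x; simp [Ebox, Set.mem_iInter]
  rw [this]
  exact h1.inter (MeasurableSet.iInter h2)

lemma pm_box (m : ℕ) [IsProbabilityMeasure ν] (c : WithBot ℝ) :
    pm ν m {x : Fin m → ℝ | ∀ j, c < (x j : WithBot ℝ)} = (G ν c) ^ m := by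
  have : {x : Fin m → ℝ | ∀ j, c < (x j : WithBot ℝ)} = Set.pi Set.univ (fun _ => Sset c) := by
    ext x; simp [Sset, Set.mem_pi]
  rw [this, pm, Measure.pi_pi]
  simp [G]

end RecordAux

namespace RecordAux

variable (ν : Measure ℝ) [IsProbabilityMeasure ν] [NullSingletonClass ν]

lemma tie_null (m : ℕ) {k l : Fin (m+1)} (hkl : k ≠ l) :
    pm ν (m+1) {x : Fin (m+1) → ℝ | x k = x l} = 0 := by
  obtain ⟨j0, hj0⟩ := Fin.exists_succAbove_eq (Ne.symm hkl)
  set e := MeasurableEquiv.piFinSuccAbove (fun _ : Fin (m+1) => ℝ) k with he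
  have MP := measurePreserving_piFinSuccAbove (fun _ : Fin (m+1) => ν) k
  set S : Set (ℝ × (Fin m → ℝ)) := {p | p.1 = p.2 j0} with hS
  have hSm : MeasurableSet S :=
    measurableSet_eq_fun measurable_fst ((measurable_pi_apply j0).comp measurable_snd)
  have hpre : ⇑e ⁻¹' S = {x : Fin (m+1) → ℝ | x k = x l} := by
    ext x
    simp only [Set.mem_preimage, hS, Set.mem_setOf_eq, he,
      MeasurableEquiv.piFinSuccAbove_apply, Fin.insertNthEquiv_symm_apply, Fin.removeNth, hj0]
  have h1 : pm ν (m+1) {x : Fin (m+1) → ℝ | x k = x l}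
      = (ν.prod (Measure.pi fun _ : Fin m => ν)) S := by
    rw [← hpre]
    exact MP.measure_preimage hSm.nullMeasurableSet
  rw [h1, Measure.prod_apply hSm]
  have : ∀ y : ℝ, (Measure.pi fun _ : Fin m => ν) (Prod.mk y ⁻¹' S) = 0 := by
    intro y
    have hset : Prod.mk y ⁻¹' S = Set.pi Set.univ (fun j => if j = j0 then {y} else Set.univ) := by
      ext z
      simp only [Set.mem_preimage, hS, Set.mem_setOf_eq, Set.mem_pi, Set.mem_univ, true_implies]
      constructor
      · intro h j
        by_cases hj : j = j0 <;> simp [hj, ← h]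
      · intro h
        have := h j0
        simp at this
        exact this.symm
    rw [hset, Measure.pi_pi]
    refine Finset.prod_eq_zero (Finset.mem_univ j0) ?_
    simp [measure_singleton]
  simp [this]

lemma measurableSet_A (m : ℕ) (c : WithBot ℝ) (k : Fin (m+1)) :
    MeasurableSet {x : Fin (m+1) → ℝ | (∀ j, c < (x j : WithBot ℝ)) ∧ ∀ j, j ≠ k → x k < x j} := by
  have h1 : MeasurableSet {x : Fin (m+1) → ℝ | ∀ j, c < (x j : WithBot ℝ)} := by
    have : {x : Fin (m+1) → ℝ | ∀ j, c < (x j : WithBot ℝ)}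
        = Set.pi Set.univ (fun _ => Sset c) := by ext x; simp [Sset, Set.mem_pi]
    rw [this]; exact MeasurableSet.univ_pi fun _ => measurableSet_Sset c
  have h2 : MeasurableSet {x : Fin (m+1) → ℝ | ∀ j, j ≠ k → x k < x j} := by
    have : {x : Fin (m+1) → ℝ | ∀ j, j ≠ k → x k < x j}
        = ⋂ j, ⋂ (_ : j ≠ k), {x : Fin (m+1) → ℝ | x k < x j} := by ext x; simp
    rw [this]
    exact MeasurableSet.iInter fun j => MeasurableSet.iInter fun _ =>
      measurableSet_lt (measurable_pi_apply k) (measurable_pi_apply j)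
  have : {x : Fin (m+1) → ℝ | (∀ j, c < (x j : WithBot ℝ)) ∧ ∀ j, j ≠ k → x k < x j}
      = {x : Fin (m+1) → ℝ | ∀ j, c < (x j : WithBot ℝ)}
        ∩ {x : Fin (m+1) → ℝ | ∀ j, j ≠ k → x k < x j} := rfl
  rw [this]; exact h1.inter h2

end RecordAux

namespace RecordAux

variable (ν : Measure ℝ) [IsProbabilityMeasure ν] [NullSingletonClass ν]

lemma measure_A_zero (m : ℕ) (c : WithBot ℝ) :
    pm ν (m+1) {x : Fin (m+1) → ℝ | (∀ j, c < (x j : WithBot ℝ)) ∧ ∀ j, j ≠ 0 → x 0 < x j}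
      = ∫⁻ y in Sset c, (G ν (y : WithBot ℝ)) ^ m ∂ν := by
  set e := MeasurableEquiv.piFinSuccAbove (fun _ : Fin (m+1) => ℝ) 0 with he
  have MP := measurePreserving_piFinSuccAbove (fun _ : Fin (m+1) => ν) 0
  set S : Set (ℝ × (Fin m → ℝ)) := {p | c < (p.1 : WithBot ℝ) ∧ ∀ j, p.1 < p.2 j} with hS
  have hSm : MeasurableSet S := by
    have h1 : MeasurableSet {p : ℝ × (Fin m → ℝ) | c < (p.1 : WithBot ℝ)} :=
      measurable_fst (measurableSet_Sset c)
    have h2 : MeasurableSet {p : ℝ × (Fin m → ℝ) | ∀ j, p.1 < p.2 j} := by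
      have : {p : ℝ × (Fin m → ℝ) | ∀ j, p.1 < p.2 j}
          = ⋂ j, {p : ℝ × (Fin m → ℝ) | p.1 < p.2 j} := by ext p; simp
      rw [this]
      exact MeasurableSet.iInter fun j =>
        measurableSet_lt measurable_fst ((measurable_pi_apply j).comp measurable_snd)
    exact h1.inter h2
  have hpre : ⇑e ⁻¹' S
      = {x : Fin (m+1) → ℝ | (∀ j, c < (x j : WithBot ℝ)) ∧ ∀ j, j ≠ 0 → x 0 < x j} := by
    ext x
    simp only [Set.mem_preimage, hS, Set.mem_setOf_eq, he,
      MeasurableEquiv.piFinSuccAbove_apply, Fin.insertNthEquiv_symm_apply, Fin.removeNth,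
      Fin.succAbove_zero]
    constructor
    · rintro ⟨h1, h2⟩
      refine ⟨?_, ?_⟩
      · intro j
        cases j using Fin.cases with
        | zero => exact h1
        | succ j' => exact lt_trans h1 (WithBot.coe_lt_coe.mpr (h2 j'))
      · intro j hj
        obtain ⟨j', rfl⟩ := Fin.eq_succ_of_ne_zero hj
        exact h2 j'
    · rintro ⟨h1, h2⟩
      exact ⟨h1 0, fun j => h2 j.succ (Fin.succ_ne_zero j)⟩
  have h1 : pm ν (m+1) {x : Fin (m+1) → ℝ | (∀ j, c < (x j : WithBot ℝ)) ∧ ∀ j, j ≠ 0 → x 0 < x j}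
      = (ν.prod (Measure.pi fun _ : Fin m => ν)) S := by
    rw [← hpre]
    exact MP.measure_preimage hSm.nullMeasurableSet
  rw [h1, Measure.prod_apply hSm]
  have hslice : ∀ y : ℝ,
      (Measure.pi fun _ : Fin m => ν) (Prod.mk y ⁻¹' S)
        = Set.indicator (Sset c) (fun y => (G ν (y : WithBot ℝ)) ^ m) y := by
    intro y
    by_cases hy : c < (y : WithBot ℝ)
    · have hset : Prod.mk y ⁻¹' S = {z : Fin m → ℝ | ∀ j, (y : WithBot ℝ) < (z j : WithBot ℝ)} := by
        ext z
        simp only [Set.mem_preimage, hS, Set.mem_setOf_eq, hy, true_and, WithBot.coe_lt_coe]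
      have hy' : y ∈ Sset c := hy
      rw [hset, Set.indicator_of_mem hy']
      exact pm_box ν m (y : WithBot ℝ)
    · have hset : Prod.mk y ⁻¹' S = ∅ := by
        ext z; simp only [Set.mem_preimage, hS, Set.mem_setOf_eq, hy, false_and,
          Set.mem_empty_iff_false]
      have hy' : y ∉ Sset c := hy
      rw [hset, Set.indicator_of_notMem hy']
      simp
  simp only [hslice]
  rw [lintegral_indicator (measurableSet_Sset c)]

lemma mul_int (m : ℕ) (c : WithBot ℝ) :
    ((m+1 : ℕ) : ℝ≥0∞) * ∫⁻ y in Sset c, (G ν (y : WithBot ℝ)) ^ m ∂ν = (G ν c) ^ (m+1) := by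
  classical
  set A : Fin (m+1) → Set (Fin (m+1) → ℝ) := fun k =>
    {x | (∀ j, c < (x j : WithBot ℝ)) ∧ ∀ j, j ≠ k → x k < x j} with hA
  have measA : ∀ k, MeasurableSet (A k) := fun k => measurableSet_A m c k
  -- all slices have the same measure
  have hsame : ∀ k, pm ν (m+1) (A k) = pm ν (m+1) (A 0) := by
    intro k
    set eqv : Fin (m+1) ≃ Fin (m+1) := Equiv.swap 0 k with heqv
    have MP := measurePreserving_piCongrLeft (fun _ : Fin (m+1) => ν) eqv
    have key : ⇑(MeasurableEquiv.piCongrLeft (fun _ : Fin (m+1) => ℝ) eqv) ⁻¹' (A 0) = A k := by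
      ext x
      set g := (MeasurableEquiv.piCongrLeft (fun _ : Fin (m+1) => ℝ) eqv) x with hgdef
      have hg : ∀ j, g (eqv j) = x j := by
        intro j
        rw [hgdef, MeasurableEquiv.coe_piCongrLeft]
        exact Equiv.piCongrLeft_apply_apply (fun _ => ℝ) eqv x j
      have hk0 : eqv k = 0 := Equiv.swap_apply_right 0 k
      have hg0 : g 0 = x k := by rw [← hk0, hg k]
      simp only [Set.mem_preimage, hA, Set.mem_setOf_eq]
      constructor
      · rintro ⟨h1, h2⟩
        refine ⟨fun j => by rw [← hg j]; exact h1 _, fun j hj => ?_⟩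
        rw [← hg0, ← hg j]
        exact h2 (eqv j) (by rw [← hk0]; exact fun h => hj (eqv.injective h))
      · rintro ⟨h1, h2⟩
        constructor
        · intro j
          have := h1 (eqv.symm j)
          rwa [← hg (eqv.symm j), Equiv.apply_symm_apply] at this
        · intro j hj
          have hjk : eqv.symm j ≠ k := by
            intro h
            apply hj
            rw [← Equiv.apply_symm_apply eqv j, h, hk0]
          have := h2 (eqv.symm j) hjk
          rwa [← hg0, ← hg (eqv.symm j), Equiv.apply_symm_apply] at this
    calc pm ν (m+1) (A k)
        = pm ν (m+1) (⇑(MeasurableEquiv.piCongrLeft (fun _ : Fin (m+1) => ℝ) eqv) ⁻¹' (A 0)) := by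
          rw [key]
      _ = pm ν (m+1) (A 0) := MP.measure_preimage (measA 0).nullMeasurableSet
  -- disjointness
  have hdisj : Pairwise (Function.onFun Disjoint A) := by
    intro k l hkl
    rw [Function.onFun, Set.disjoint_left]
    rintro x ⟨-, h2⟩ ⟨-, h4⟩
    exact absurd (h4 k hkl) (not_lt.mpr (le_of_lt (h2 l hkl.symm)))
  -- covering up to ties
  have hcover : {x : Fin (m+1) → ℝ | ∀ j, c < (x j : WithBot ℝ)}
      ⊆ (⋃ k, A k) ∪ ⋃ (k) (l) (_ : k ≠ l), {x : Fin (m+1) → ℝ | x k = x l} := by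
    intro x hx
    by_cases hmem : x ∈ ⋃ k, A k
    · exact Or.inl hmem
    · right
      obtain ⟨k, -, hk⟩ := Finset.exists_min_image Finset.univ x ⟨0, Finset.mem_univ 0⟩
      have : ¬ (∀ j, j ≠ k → x k < x j) := by
        intro h
        exact hmem (Set.mem_iUnion.mpr ⟨k, ⟨hx, h⟩⟩)
      push_neg at this
      obtain ⟨j, hjk, hle⟩ := this
      have heq : x k = x j := le_antisymm (hk j (Finset.mem_univ j)) hle
      exact Set.mem_iUnion.mpr ⟨k, Set.mem_iUnion.mpr ⟨j,
        Set.mem_iUnion.mpr ⟨hjk.symm, heq⟩⟩⟩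
  have hties : pm ν (m+1) (⋃ (k) (l) (_ : k ≠ l), {x : Fin (m+1) → ℝ | x k = x l}) = 0 :=
    measure_iUnion_null fun k => measure_iUnion_null fun l => measure_iUnion_null fun h =>
      tie_null ν m h
  have hsub : ⋃ k, A k ⊆ {x : Fin (m+1) → ℝ | ∀ j, c < (x j : WithBot ℝ)} := by
    rintro x hx
    obtain ⟨k, hk⟩ := Set.mem_iUnion.mp hx
    exact hk.1
  -- sum of measures equals box measure
  have hsum : ∑ k : Fin (m+1), pm ν (m+1) (A k) = (G ν c) ^ (m+1) := by
    have hU : pm ν (m+1) (⋃ k, A k) = ∑ k : Fin (m+1), pm ν (m+1) (A k) := by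
      rw [measure_iUnion hdisj measA, tsum_fintype]
    have hle1 : pm ν (m+1) {x : Fin (m+1) → ℝ | ∀ j, c < (x j : WithBot ℝ)}
        ≤ pm ν (m+1) (⋃ k, A k) := by
      calc pm ν (m+1) {x : Fin (m+1) → ℝ | ∀ j, c < (x j : WithBot ℝ)}
          ≤ pm ν (m+1) ((⋃ k, A k) ∪ ⋃ (k) (l) (_ : k ≠ l), {x : Fin (m+1) → ℝ | x k = x l}) :=
            measure_mono hcover
        _ ≤ pm ν (m+1) (⋃ k, A k)
            + pm ν (m+1) (⋃ (k) (l) (_ : k ≠ l), {x : Fin (m+1) → ℝ | x k = x l}) :=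
            measure_union_le _ _
        _ = pm ν (m+1) (⋃ k, A k) := by rw [hties, add_zero]
    have hle2 : pm ν (m+1) (⋃ k, A k)
        ≤ pm ν (m+1) {x : Fin (m+1) → ℝ | ∀ j, c < (x j : WithBot ℝ)} := measure_mono hsub
    have : pm ν (m+1) (⋃ k, A k)
        = pm ν (m+1) {x : Fin (m+1) → ℝ | ∀ j, c < (x j : WithBot ℝ)} :=
      le_antisymm hle2 hle1
    rw [← hU, this, pm_box]
  have hconst : ∑ k : Fin (m+1), pm ν (m+1) (A k)
      = ((m+1 : ℕ) : ℝ≥0∞) * pm ν (m+1) (A 0) := by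
    rw [Finset.sum_congr rfl (fun k _ => hsame k)]
    simp [Finset.sum_const, mul_comm]
  rw [← measure_A_zero ν m c, ← hconst, hsum]

end RecordAux

namespace RecordAux

/-- probability that the `k`-th sample is (`v = 1`) / is not (`v = 0`) a record -/
noncomputable def q (k : ℕ) (v : Fin 2) : ℝ≥0∞ :=
  (if v = 1 then 1 else ((k - 1 : ℕ) : ℝ≥0∞)) / (k : ℕ)

lemma q_ne_top {k : ℕ} (hk : 1 ≤ k) (v : Fin 2) : q k v ≠ ⊤ := by
  unfold q
  refine (ENNReal.div_lt_top ?_ ?_).ne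
  · split <;> simp
  · simp only [ne_eq, Nat.cast_eq_zero]; omega

lemma q_ne_zero {k : ℕ} (hk : 2 ≤ k) (v : Fin 2) : q k v ≠ 0 := by
  unfold q
  rw [ENNReal.div_ne_zero]
  constructor
  · split
    · simp
    · simp only [ne_eq, Nat.cast_eq_zero]; omega
  · simp

lemma sub_aux (X : ℝ≥0∞) (hX : X ≠ ⊤) (m : ℕ) :
    X - X / ((m+1 : ℕ) : ℝ≥0∞) = X * ((m : ℕ) : ℝ≥0∞) / ((m+1 : ℕ) : ℝ≥0∞) := by
  have hd0 : ((m+1 : ℕ) : ℝ≥0∞) ≠ 0 := by simp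
  have hdt : ((m+1 : ℕ) : ℝ≥0∞) ≠ ⊤ := by simp
  rw [div_eq_mul_inv, div_eq_mul_inv]
  refine ENNReal.sub_eq_of_eq_add (ENNReal.mul_ne_top hX (ENNReal.inv_ne_top.mpr hd0)) ?_
  calc X = X * (((m+1 : ℕ) : ℝ≥0∞) * (((m+1 : ℕ) : ℝ≥0∞))⁻¹) := by
        rw [ENNReal.mul_inv_cancel hd0 hdt, mul_one]
    _ = (X * ((m : ℕ) : ℝ≥0∞) + X) * (((m+1 : ℕ) : ℝ≥0∞))⁻¹ := by
        rw [← mul_assoc]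
        congr 1
        rw [Nat.cast_add, Nat.cast_one, mul_add_one]
    _ = X * ((m : ℕ) : ℝ≥0∞) * (((m+1 : ℕ) : ℝ≥0∞))⁻¹ + X * (((m+1 : ℕ) : ℝ≥0∞))⁻¹ := by
        rw [add_mul]

variable (ν : Measure ℝ) [IsProbabilityMeasure ν] [NullSingletonClass ν]

theorem Ebox_measure (b : ℕ → Fin 2) :
    ∀ (m : ℕ) (c : WithBot ℝ),
      pm ν m (Ebox m c b) = (G ν c) ^ m * ∏ k ∈ Finset.Icc 2 m, q k (b k) := by
  intro m
  induction m with
  | zero =>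
    intro c
    have : Ebox 0 c b = Set.univ := by
      ext x
      simp only [Ebox, Set.mem_setOf_eq, Set.mem_univ, iff_true]
      exact ⟨fun j => j.elim0, fun k => k.elim0⟩
    rw [this]
    simp
  | succ m ih =>
    intro c
    set e := MeasurableEquiv.piFinSuccAbove (fun _ : Fin (m+1) => ℝ) (Fin.last m) with he
    have MP := measurePreserving_piFinSuccAbove (fun _ : Fin (m+1) => ν) (Fin.last m)
    set S : Set (ℝ × (Fin m → ℝ)) := {p | c < (p.1 : WithBot ℝ) ∧ p.2 ∈ Ebox m c b
      ∧ (1 ≤ m → ((∀ j, p.1 < p.2 j) ↔ b (m+1) = 1))} with hS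
    have hSm : MeasurableSet S := by
      have h1 : MeasurableSet {p : ℝ × (Fin m → ℝ) | c < (p.1 : WithBot ℝ)} :=
        measurable_fst (measurableSet_Sset c)
      have h2 : MeasurableSet {p : ℝ × (Fin m → ℝ) | p.2 ∈ Ebox m c b} :=
        measurable_snd (measurableSet_Ebox m c b)
      have hlt : MeasurableSet {p : ℝ × (Fin m → ℝ) | ∀ j, p.1 < p.2 j} := by
        have : {p : ℝ × (Fin m → ℝ) | ∀ j, p.1 < p.2 j}
            = ⋂ j, {p : ℝ × (Fin m → ℝ) | p.1 < p.2 j} := by ext p; simp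
        rw [this]
        exact MeasurableSet.iInter fun j =>
          measurableSet_lt measurable_fst ((measurable_pi_apply j).comp measurable_snd)
      have h3 : MeasurableSet {p : ℝ × (Fin m → ℝ) |
          1 ≤ m → ((∀ j, p.1 < p.2 j) ↔ b (m+1) = 1)} := by
        by_cases hm : 1 ≤ m
        · by_cases hb : b (m+1) = 1
          · have : {p : ℝ × (Fin m → ℝ) | 1 ≤ m → ((∀ j, p.1 < p.2 j) ↔ b (m+1) = 1)}
                = {p : ℝ × (Fin m → ℝ) | ∀ j, p.1 < p.2 j} := by ext p; simp [hm, hb]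
            rw [this]; exact hlt
          · have : {p : ℝ × (Fin m → ℝ) | 1 ≤ m → ((∀ j, p.1 < p.2 j) ↔ b (m+1) = 1)}
                = {p : ℝ × (Fin m → ℝ) | ∀ j, p.1 < p.2 j}ᶜ := by ext p; simp [hm, hb]
            rw [this]; exact hlt.compl
        · have : {p : ℝ × (Fin m → ℝ) | 1 ≤ m → ((∀ j, p.1 < p.2 j) ↔ b (m+1) = 1)}
              = Set.univ := by ext p; simp [hm]
          rw [this]; exact MeasurableSet.univ
      exact h1.inter (h2.inter h3)
    -- the forall-reindexing helper
    have hforall : ∀ (x : Fin (m+1) → ℝ) (K : ℕ), K ≤ m → ∀ v : ℝ,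
        ((∀ j : Fin (m+1), (j : ℕ) < K → v < x j)
          ↔ (∀ j' : Fin m, (j' : ℕ) < K → v < x j'.castSucc)) := by
      intro x K hK v
      constructor
      · intro h j' hj'
        exact h j'.castSucc (by simpa using hj')
      · intro h j hj
        have hjm : (j : ℕ) < m := lt_of_lt_of_le hj hK
        have hxe : x j = x (Fin.castSucc ⟨(j : ℕ), hjm⟩) := rfl
        rw [hxe]
        exact h ⟨(j : ℕ), hjm⟩ hj
    have htriv : ∀ (x : Fin (m+1) → ℝ) (v : ℝ),
        (∀ j' : Fin m, (j' : ℕ) < m → v < x j'.castSucc) ↔ (∀ j' : Fin m, v < x j'.castSucc) :=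
      fun x v => ⟨fun h j => h j j.isLt, fun h j _ => h j⟩
    have hpre : ⇑e ⁻¹' S = Ebox (m+1) c b := by
      ext x
      simp only [Set.mem_preimage, hS, Set.mem_setOf_eq, he, Ebox,
        MeasurableEquiv.piFinSuccAbove_apply, Fin.insertNthEquiv_symm_apply, Fin.removeNth,
        Fin.succAbove_last]
      constructor
      · rintro ⟨hc, ⟨hE1, hE2⟩, hlast⟩
        constructor
        · intro j
          cases j using Fin.lastCases with
          | last => exact hc
          | cast j' => exact hE1 j'
        · intro k hk
          cases k using Fin.lastCases with
          | last =>
            rw [Fin.val_last] at hk ⊢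
            rw [hforall x m le_rfl _, htriv x _]
            exact hlast hk
          | cast k' =>
            simp only [Fin.coe_castSucc] at hk ⊢
            rw [hforall x (k' : ℕ) (le_of_lt k'.isLt) _]
            exact hE2 k' hk
      · rintro ⟨h1, h2⟩
        refine ⟨h1 _, ⟨fun j' => h1 _, ?_⟩, ?_⟩
        · intro k' hk'
          have := h2 k'.castSucc (by simpa using hk')
          simp only [Fin.coe_castSucc] at this
          rw [← this]
          exact (hforall x (k' : ℕ) (le_of_lt k'.isLt) _).symm
        · intro h1m
          have := h2 (Fin.last m) (by simpa using h1m)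
          rw [Fin.val_last] at this
          rw [← this]
          exact ((hforall x m le_rfl _).trans (htriv x _)).symm
    have hmain : pm ν (m+1) (Ebox (m+1) c b) = (ν.prod (Measure.pi fun _ : Fin m => ν)) S := by
      rw [← hpre]
      exact MP.measure_preimage hSm.nullMeasurableSet
    rw [hmain, Measure.prod_apply hSm]
    by_cases hm : m = 0
    · -- trivial case: only box constraint
      subst hm
      have hslice : ∀ y : ℝ, (Measure.pi fun _ : Fin 0 => ν) (Prod.mk y ⁻¹' S)
          = Set.indicator (Sset c) (fun _ => (1 : ℝ≥0∞)) y := by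
        intro y
        by_cases hy : c < (y : WithBot ℝ)
        · have hset : Prod.mk y ⁻¹' S = Set.univ := by
            ext z
            simp only [Set.mem_preimage, hS, Set.mem_setOf_eq, Set.mem_univ, iff_true, hy,
              true_and]
            exact ⟨⟨fun j => j.elim0, fun k => k.elim0⟩, by omega⟩
          have hy' : y ∈ Sset c := hy
          rw [hset, Set.indicator_of_mem hy']
          simp
        · have hset : Prod.mk y ⁻¹' S = ∅ := by
            ext z
            simp only [Set.mem_preimage, hS, Set.mem_setOf_eq, hy, false_and,
              Set.mem_empty_iff_false]
          have hy' : y ∉ Sset c := hy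
          rw [hset, Set.indicator_of_notMem hy']
          simp
      simp only [hslice]
      rw [lintegral_indicator (measurableSet_Sset c)]
      simp [G]
    · have h1m : 1 ≤ m := Nat.one_le_iff_ne_zero.mpr hm
      set Q : ℝ≥0∞ := ∏ k ∈ Finset.Icc 2 m, q k (b k) with hQ
      have hQtop : Q ≠ ⊤ := by
        rw [hQ]
        exact (ENNReal.prod_lt_top (fun k hk => by
          refine (q_ne_top ?_ (b k)).lt_top
          have := Finset.mem_Icc.mp hk
          omega)).ne
      have hprod : ∏ k ∈ Finset.Icc 2 (m+1), q k (b k) = Q * q (m+1) (b (m+1)) := by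
        rw [hQ, Finset.prod_Icc_succ_top (by omega : 2 ≤ m + 1)]
      by_cases hb : b (m+1) = 1
      · -- record at position m+1
        have hslice : ∀ y : ℝ, (Measure.pi fun _ : Fin m => ν) (Prod.mk y ⁻¹' S)
            = Set.indicator (Sset c) (fun y => (G ν (y : WithBot ℝ)) ^ m * Q) y := by
          intro y
          by_cases hy : c < (y : WithBot ℝ)
          · have hset : Prod.mk y ⁻¹' S = Ebox m (y : WithBot ℝ) b := by
              ext z
              simp only [Set.mem_preimage, hS, Set.mem_setOf_eq, hy, true_and, hb, iff_true,
                Ebox]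
              constructor
              · rintro ⟨⟨-, hz2⟩, hz3⟩
                exact ⟨fun j => WithBot.coe_lt_coe.mpr ((hz3 h1m) j), hz2⟩
              · rintro ⟨hz1, hz2⟩
                exact ⟨⟨fun j => lt_trans hy (hz1 j), hz2⟩,
                  fun _ j => WithBot.coe_lt_coe.mp (hz1 j)⟩
            have hy' : y ∈ Sset c := hy
            rw [hset, Set.indicator_of_mem hy']
            exact ih (y : WithBot ℝ)
          · have hset : Prod.mk y ⁻¹' S = ∅ := by
              ext z
              simp only [Set.mem_preimage, hS, Set.mem_setOf_eq, hy, false_and,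
                Set.mem_empty_iff_false]
            have hy' : y ∉ Sset c := hy
            rw [hset, Set.indicator_of_notMem hy']
            simp
        simp only [hslice]
        rw [lintegral_indicator (measurableSet_Sset c)]
        have : ∫⁻ y in Sset c, (G ν (y : WithBot ℝ)) ^ m * Q ∂ν
            = Q * ∫⁻ y in Sset c, (G ν (y : WithBot ℝ)) ^ m ∂ν := by
          rw [← lintegral_const_mul Q (by exact (measurable_G_coe ν).pow_const m)]
          congr 1
          ext y
          ring
        rw [this]
        have hint : ∫⁻ y in Sset c, (G ν (y : WithBot ℝ)) ^ m ∂ν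
            = (G ν c) ^ (m+1) / ((m+1 : ℕ) : ℝ≥0∞) := by
          rw [ENNReal.eq_div_iff (by simp) (by simp)]
          exact mul_int ν m c
        rw [hint, hprod, hb]
        have hq1 : q (m+1) (1 : Fin 2) = 1 / ((m+1 : ℕ) : ℝ≥0∞) := by unfold q; simp
        rw [hq1, ENNReal.div_eq_inv_mul, ENNReal.div_eq_inv_mul]
        ring
      · -- no record at position m+1
        have hb0 : b (m+1) = 0 := by
          have h2 := (b (m+1)).isLt
          have h1 : (b (m+1) : ℕ) ≠ 1 := fun h => hb (Fin.ext h)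
          exact Fin.ext (by omega)
        have hsubset : ∀ y : ℝ, c < (y : WithBot ℝ)
            → Ebox m (y : WithBot ℝ) b ⊆ Ebox m c b := by
          intro y hy z hz
          exact ⟨fun j => lt_trans hy (hz.1 j), hz.2⟩
        have hslice : ∀ y : ℝ, (Measure.pi fun _ : Fin m => ν) (Prod.mk y ⁻¹' S)
            = Set.indicator (Sset c)
              (fun y => Q * (G ν c) ^ m - Q * (G ν (y : WithBot ℝ)) ^ m) y := by
          intro y
          by_cases hy : c < (y : WithBot ℝ)
          · have hset : Prod.mk y ⁻¹' S = Ebox m c b \ Ebox m (y : WithBot ℝ) b := by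
              ext z
              simp only [Set.mem_preimage, hS, Set.mem_setOf_eq, hy, true_and, hb,
                iff_false, Set.mem_diff]
              constructor
              · rintro ⟨hz1, hz2⟩
                refine ⟨hz1, fun hzy => ?_⟩
                exact (hz2 h1m) (fun j => WithBot.coe_lt_coe.mp (hzy.1 j))
              · rintro ⟨hz1, hz2⟩
                refine ⟨hz1, fun _ => fun hall => hz2 ?_⟩
                exact ⟨fun j => WithBot.coe_lt_coe.mpr (hall j), hz1.2⟩
            have hy' : y ∈ Sset c := hy
            rw [hset, Set.indicator_of_mem hy',
              measure_diff (hsubset y hy) (measurableSet_Ebox m _ b).nullMeasurableSet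
                (measure_ne_top _ _),
              show (Measure.pi fun _ : Fin m => ν) = pm ν m from rfl,
              ih (y : WithBot ℝ), ih c]
            congr 1 <;> ring
          · have hset : Prod.mk y ⁻¹' S = ∅ := by
              ext z
              simp only [Set.mem_preimage, hS, Set.mem_setOf_eq, hy, false_and,
                Set.mem_empty_iff_false]
            have hy' : y ∉ Sset c := hy
            rw [hset, Set.indicator_of_notMem hy']
            simp
        simp only [hslice]
        rw [lintegral_indicator (measurableSet_Sset c)]
        have hmeasg : Measurable (fun y : ℝ => Q * (G ν (y : WithBot ℝ)) ^ m) :=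
          ((measurable_G_coe ν).pow_const m).const_mul Q
        have hintg : ∫⁻ y in Sset c, Q * (G ν (y : WithBot ℝ)) ^ m ∂ν
            = Q * ((G ν c) ^ (m+1) / ((m+1 : ℕ) : ℝ≥0∞)) := by
          rw [lintegral_const_mul Q ((measurable_G_coe ν).pow_const m)]
          congr 1
          rw [ENNReal.eq_div_iff (by simp) (by simp)]
          exact mul_int ν m c
        have hgle : ∀ y ∈ Sset c, Q * (G ν (y : WithBot ℝ)) ^ m ≤ Q * (G ν c) ^ m := by
          intro y hy
          have hy' : c < (y : WithBot ℝ) := hy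
          refine mul_le_mul_right (pow_le_pow_left' ?_ m) Q
          refine measure_mono fun z hz => ?_
          have hz' : (y : WithBot ℝ) < (z : WithBot ℝ) := hz
          exact lt_trans hy' hz'
        have hXtop : Q * (G ν c) ^ (m+1) ≠ ⊤ :=
          ENNReal.mul_ne_top hQtop (ENNReal.pow_ne_top (measure_ne_top _ _))
        have hgtop : ∫⁻ y in Sset c, Q * (G ν (y : WithBot ℝ)) ^ m ∂ν ≠ ⊤ := by
          rw [hintg]
          exact ENNReal.mul_ne_top hQtop
            ((ENNReal.div_lt_top (ENNReal.pow_ne_top (measure_ne_top _ _)) (by simp)).ne)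
        rw [lintegral_sub hmeasg hgtop
          ((ae_restrict_iff' (measurableSet_Sset c)).2 (ae_of_all _ hgle))]
        rw [hintg, setLIntegral_const,
          show ν (Sset c) = G ν c from rfl]
        have e1 : Q * (G ν c) ^ m * G ν (c) = Q * (G ν c) ^ (m+1) := by
          rw [pow_succ, mul_assoc]
        have e2 : Q * ((G ν c) ^ (m+1) / ((m+1 : ℕ) : ℝ≥0∞))
            = Q * (G ν c) ^ (m+1) / ((m+1 : ℕ) : ℝ≥0∞) := (mul_div_assoc _ _ _).symm
        rw [show G ν c = G ν c from rfl] -- no-op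
        have hq0 : q (m+1) (b (m+1)) = ((m : ℕ) : ℝ≥0∞) / ((m+1 : ℕ) : ℝ≥0∞) := by
          rw [hb0]
          unfold q
          rw [if_neg (by decide)]
          simp
        rw [e1, e2, sub_aux _ hXtop m, hprod, hq0]
        rw [div_eq_mul_inv, div_eq_mul_inv]
        ring

end RecordAux

namespace RecordAux

lemma recordInd_eq_one_iff {Ω : Type*} (η : ℕ → Ω → ℝ) (k : ℕ) (hk : 2 ≤ k) (ω : Ω) :
    recordInd η k ω = 1 ↔ ∀ j, 1 ≤ j → j < k → η k ω < η j ω := by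
  unfold recordInd
  set D := (fun j => η j ω) '' {j | 1 ≤ j ∧ j < k} with hD
  have hsetIco : {j : ℕ | 1 ≤ j ∧ j < k} = Set.Ico 1 k := by
    ext j; simp [Set.mem_Ico]
  have hfin : D.Finite := by
    rw [hD, hsetIco]; exact (Set.finite_Ico 1 k).image _
  have hne : D.Nonempty := ⟨η 1 ω, ⟨1, ⟨le_rfl, by omega⟩, rfl⟩⟩
  have key : η k ω < sInf D ↔ ∀ y ∈ D, η k ω < y :=
    ⟨fun h y hy => lt_of_lt_of_le h (csInf_le hfin.bddBelow hy),
     fun h => h _ (hne.csInf_mem hfin)⟩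
  by_cases h : η k ω < sInf D
  · rw [if_pos h]
    simp only [true_iff]
    intro j h1 hj
    exact key.mp h (η j ω) ⟨j, ⟨h1, hj⟩, rfl⟩
  · rw [if_neg h]
    constructor
    · intro h0
      exact absurd h0 (by decide)
    · intro hall
      exact absurd (key.mpr (by rintro y ⟨j, ⟨h1, hj⟩, rfl⟩; exact hall j h1 hj)) h

lemma fin2_eq_of_iff {a v : Fin 2} (h : a = 1 ↔ v = 1) : a = v := by
  fin_cases a <;> fin_cases v <;> simp_all

end RecordAux


/-- For i.i.d. real random variables `η₁, …, η_n` (`n ≥ 2`) with atomless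
common distribution and record indicators `B_i = I(η_i < min(η₁, …, η_{i−1}))`, for every
`2 ≤ i ≤ n` the conditional entropy `H(B_i | B₂, …, B_{i−1})` equals `π(i−1)`. -/
theorem condEntropy_record_indicator {Ω : Type*} [MeasurableSpace Ω] (μ : Measure Ω)
    [IsProbabilityMeasure μ] (n : ℕ) (hn : 2 ≤ n) (η : ℕ → Ω → ℝ)
    (hmeas : ∀ i, Measurable (η i))
    (hindep : iIndepFun
      (fun i : (Finset.Icc 1 n : Finset ℕ) => η i) μ)
    (hident : ∀ i j, 1 ≤ i → i ≤ n → 1 ≤ j → j ≤ n → IdentDistrib (η i) (η j) μ μ)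
    (hatomless : ∀ i, 1 ≤ i → i ≤ n → NoAtoms (μ.map (η i))) :
    ∀ i, 2 ≤ i → i ≤ n →
      condEntropy μ (recordInd η i) (fun ω (j : Fin (i - 2)) => recordInd η (j.1 + 2) ω)
        = piFun (i - 1) := by
  classical
  intro i hi2 hin
  set Y : Ω → (Fin (i - 2) → Fin 2) := fun ω (j : Fin (i - 2)) => recordInd η (j.1 + 2) ω
    with hYdef
  set ν : Measure ℝ := μ.map (η 1) with hν
  haveI hprob : IsProbabilityMeasure ν := Measure.isProbabilityMeasure_map (hmeas 1).aemeasurable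
  haveI hnoatom : NullSingletonClass ν := hatomless 1 le_rfl (by omega)
  set T : Ω → (Fin i → ℝ) := fun ω j => η ((j : ℕ) + 1) ω with hTdef
  have hTmeas : Measurable T := measurable_pi_lambda _ fun j => hmeas _
  -- Step 1 : the joint law of `(η 1, …, η i)` is the product measure `ν^i`.
  have hmap : μ.map T = RecordAux.pm ν i := by
    unfold RecordAux.pm
    symm
    apply Measure.pi_eq
    intro sets hsets
    rw [Measure.map_apply hTmeas (MeasurableSet.univ_pi hsets)]
    have hpre : T ⁻¹' (Set.pi Set.univ sets) = ⋂ j : Fin i, η ((j : ℕ) + 1) ⁻¹' sets j := by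
      ext ω; simp [hTdef, Set.mem_pi]
    rw [hpre]
    set em : Fin i → {x // x ∈ Finset.Icc 1 n} := fun j =>
      ⟨(j : ℕ) + 1, by rw [Finset.mem_Icc]; have := j.isLt; omega⟩ with hem
    have hinj : Function.Injective em := by
      intro a b' hab
      have h1 : (a : ℕ) + 1 = (b' : ℕ) + 1 := congrArg Subtype.val hab
      exact Fin.ext (by omega)
    set S2 : {x // x ∈ Finset.Icc 1 n} → Set ℝ := fun a =>
      if h : ∃ j : Fin i, em j = a then sets h.choose else Set.univ with hS2
    have hS2em : ∀ j, S2 (em j) = sets j := by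
      intro j
      have hex : ∃ j' : Fin i, em j' = em j := ⟨j, rfl⟩
      rw [hS2]
      simp only [dif_pos hex]
      exact congrArg sets (hinj hex.choose_spec)
    have hS2meas : ∀ a, MeasurableSet (S2 a) := by
      intro a
      rw [hS2]
      dsimp only
      split
      · exact hsets _
      · exact MeasurableSet.univ
    have hind := hindep.measure_inter_preimage_eq_mul (Finset.image em Finset.univ)
      (fun a _ => hS2meas a)
    have hInter : (⋂ a ∈ Finset.image em Finset.univ, (fun ω => η (a : ℕ) ω) ⁻¹' S2 a)
        = ⋂ j : Fin i, η ((j : ℕ) + 1) ⁻¹' sets j := by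
      ext ω
      simp only [Set.mem_iInter, Set.mem_preimage]
      constructor
      · intro h j
        have := h (em j) (Finset.mem_image_of_mem em (Finset.mem_univ j))
        rwa [hS2em] at this
      · intro h a ha
        obtain ⟨j, -, rfl⟩ := Finset.mem_image.mp ha
        rw [hS2em]
        exact h j
    have hProd : ∏ a ∈ Finset.image em Finset.univ, μ ((fun ω => η (a : ℕ) ω) ⁻¹' S2 a)
        = ∏ j : Fin i, ν (sets j) := by
      rw [Finset.prod_image (fun a _ b' _ h => hinj h)]
      refine Finset.prod_congr rfl fun j _ => ?_
      rw [hS2em]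
      have hid : μ.map (η ((j : ℕ) + 1)) = ν := by
        rw [hν]
        exact (hident ((j : ℕ) + 1) 1 (by omega) (by have := j.isLt; omega) le_rfl
          (by omega)).map_eq
      rw [← hid, Measure.map_apply (hmeas _) (hsets j)]
    rw [← hInter, ← hProd]
    exact hind
  -- Step 2 : record indicators expressed through `T`.
  have hrecord : ∀ (ω : Ω) (kf : Fin i), 1 ≤ (kf : ℕ) →
      ((∀ j : Fin i, (j : ℕ) < (kf : ℕ) → T ω kf < T ω j)
        ↔ recordInd η ((kf : ℕ) + 1) ω = 1) := by
    intro ω kf hkf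
    rw [RecordAux.recordInd_eq_one_iff η ((kf : ℕ) + 1) (by omega) ω]
    constructor
    · intro h j h1 hj
      have hj' : j - 1 < i := by have := kf.isLt; omega
      have hT1 : T ω ⟨j - 1, hj'⟩ = η j ω := by
        show η ((j - 1) + 1) ω = η j ω
        congr 1
        omega
      have := h ⟨j - 1, hj'⟩ (show j - 1 < (kf : ℕ) by omega)
      rw [hT1] at this
      exact this
    · intro h j hj
      exact h ((j : ℕ) + 1) (by omega) (by omega)
  -- Step 3 : the joint events correspond to `Ebox` events.
  set bfun : Fin 2 → (Fin (i - 2) → Fin 2) → ℕ → Fin 2 := fun s t k =>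
    if k = i then s else if h : 2 ≤ k ∧ k < i then t ⟨k - 2, by omega⟩ else 0 with hbfun
  have hEvent : ∀ (s : Fin 2) (t : Fin (i - 2) → Fin 2),
      recordInd η i ⁻¹' {s} ∩ Y ⁻¹' {t} = T ⁻¹' RecordAux.Ebox i ⊥ (bfun s t) := by
    intro s t
    ext ω
    simp only [Set.mem_inter_iff, Set.mem_preimage, Set.mem_singleton_iff, RecordAux.Ebox,
      Set.mem_setOf_eq, hYdef, funext_iff]
    constructor
    · rintro ⟨hs, ht⟩
      refine ⟨fun j => WithBot.bot_lt_coe _, ?_⟩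
      intro kf hkf
      rw [hrecord ω kf hkf]
      have hval : recordInd η ((kf : ℕ) + 1) ω = bfun s t ((kf : ℕ) + 1) := by
        by_cases hKi : (kf : ℕ) + 1 = i
        · rw [hKi]
          have hb : bfun s t i = s := by rw [hbfun]; simp
          rw [hb]
          exact hs
        · have h2K : 2 ≤ (kf : ℕ) + 1 := by omega
          have hKlt : (kf : ℕ) + 1 < i := by have := kf.isLt; omega
          have hb : bfun s t ((kf : ℕ) + 1) = t ⟨(kf : ℕ) + 1 - 2, by omega⟩ := by
            rw [hbfun]
            simp only [if_neg hKi]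
            rw [dif_pos ⟨h2K, hKlt⟩]
          rw [hb]
          have hjlt : (kf : ℕ) - 1 < i - 2 := by omega
          have := ht ⟨(kf : ℕ) - 1, hjlt⟩
          have he1 : ((⟨(kf : ℕ) - 1, hjlt⟩ : Fin (i - 2)) : ℕ) + 2 = (kf : ℕ) + 1 := by
            show (kf : ℕ) - 1 + 2 = (kf : ℕ) + 1
            omega
          rw [he1] at this
          rw [this]
          congr 1
          all_goals exact Fin.ext (by omega)
      rw [hval]
    · rintro ⟨-, hall⟩
      have key : ∀ kf : Fin i, 1 ≤ (kf : ℕ) →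
          (recordInd η ((kf : ℕ) + 1) ω = 1 ↔ bfun s t ((kf : ℕ) + 1) = 1) :=
        fun kf hkf => (hrecord ω kf hkf).symm.trans (hall kf hkf)
      constructor
      · have hlt : i - 1 < i := by omega
        have h1 : recordInd η ((i - 1) + 1) ω = 1 ↔ bfun s t ((i - 1) + 1) = 1 :=
          key ⟨i - 1, hlt⟩ (by show 1 ≤ i - 1; omega)
        have he : i - 1 + 1 = i := by omega
        rw [he] at h1
        have hb : bfun s t i = s := by rw [hbfun]; simp
        rw [hb] at h1
        exact RecordAux.fin2_eq_of_iff h1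
      · intro j
        have hjlt : (j : ℕ) + 1 < i := by have := j.isLt; omega
        have h1 : recordInd η (((j : ℕ) + 1) + 1) ω = 1 ↔ bfun s t (((j : ℕ) + 1) + 1) = 1 :=
          key ⟨(j : ℕ) + 1, hjlt⟩ (by show 1 ≤ (j : ℕ) + 1; omega)
        have he : (j : ℕ) + 1 + 1 = (j : ℕ) + 2 := by omega
        rw [he] at h1
        have hb : bfun s t ((j : ℕ) + 2) = t j := by
          rw [hbfun]
          have hne : (j : ℕ) + 2 ≠ i := by have := j.isLt; omega
          have hcond : 2 ≤ (j : ℕ) + 2 ∧ (j : ℕ) + 2 < i := by have := j.isLt; omega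
          simp only [if_neg hne]
          rw [dif_pos hcond]
          congr 1
          all_goals exact Fin.ext (by omega)
        rw [hb] at h1
        exact RecordAux.fin2_eq_of_iff h1
  -- Step 4 : measures of the joint events.
  have hEval : ∀ (s : Fin 2) (t : Fin (i - 2) → Fin 2),
      μ (recordInd η i ⁻¹' {s} ∩ Y ⁻¹' {t})
        = (∏ k ∈ Finset.Icc 2 (i - 1), RecordAux.q k (bfun s t k)) * RecordAux.q i s := by
    intro s t
    rw [hEvent s t, ← Measure.map_apply hTmeas (RecordAux.measurableSet_Ebox i ⊥ (bfun s t)),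
      hmap, RecordAux.Ebox_measure ν (bfun s t) i ⊥]
    have hG : RecordAux.G ν ⊥ = 1 := by
      rw [RecordAux.G, RecordAux.Sset_bot]; exact measure_univ
    rw [hG, one_pow, one_mul]
    have hsplit : Finset.Icc 2 i = Finset.Icc 2 ((i - 1) + 1) := by congr 1; omega
    rw [hsplit, Finset.prod_Icc_succ_top (by omega : 2 ≤ (i - 1) + 1)]
    congr 1
    have h1 : (i - 1) + 1 = i := by omega
    rw [h1, hbfun]
    simp
  have hQind : ∀ (s : Fin 2) (t : Fin (i - 2) → Fin 2),
      ∏ k ∈ Finset.Icc 2 (i - 1), RecordAux.q k (bfun s t k)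
        = ∏ k ∈ Finset.Icc 2 (i - 1), RecordAux.q k (bfun 0 t k) := by
    intro s t
    refine Finset.prod_congr rfl fun k hk => ?_
    have hk' := Finset.mem_Icc.mp hk
    have hki : k ≠ i := by omega
    rw [hbfun]
    simp only [if_neg hki]
  set Qr : (Fin (i - 2) → Fin 2) → ℝ≥0∞ := fun t =>
    ∏ k ∈ Finset.Icc 2 (i - 1), RecordAux.q k (bfun 0 t k) with hQr
  have hJoint : ∀ s t, μ (recordInd η i ⁻¹' {s} ∩ Y ⁻¹' {t}) = Qr t * RecordAux.q i s :=
    fun s t => by rw [hEval s t, hQind s t]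
  have hq01 : RecordAux.q i 0 + RecordAux.q i 1 = 1 := by
    unfold RecordAux.q
    rw [if_neg (by decide), if_pos rfl, ENNReal.div_add_div_same]
    have hcast : ((i - 1 : ℕ) : ℝ≥0∞) + 1 = ((i : ℕ) : ℝ≥0∞) := by
      have h2 : i = (i - 1) + 1 := by omega
      conv_rhs => rw [h2]
      rw [Nat.cast_add, Nat.cast_one]
    rw [hcast]
    exact ENNReal.div_self (by simp; omega) (by simp)
  have hYmeas : ∀ s t, MeasurableSet (recordInd η i ⁻¹' {s} ∩ Y ⁻¹' {t}) := fun s t => by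
    rw [hEvent s t]; exact hTmeas (RecordAux.measurableSet_Ebox _ _ _)
  have fin2 : ∀ v : Fin 2, v = 0 ∨ v = 1 := by decide
  have hYsplit : ∀ t, Y ⁻¹' {t}
      = (recordInd η i ⁻¹' {0} ∩ Y ⁻¹' {t}) ∪ (recordInd η i ⁻¹' {1} ∩ Y ⁻¹' {t}) := by
    intro t
    ext ω
    simp only [Set.mem_union, Set.mem_inter_iff, Set.mem_preimage, Set.mem_singleton_iff]
    constructor
    · intro h
      rcases fin2 (recordInd η i ω) with h0 | h1
      · exact Or.inl ⟨h0, h⟩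
      · exact Or.inr ⟨h1, h⟩
    · rintro (⟨-, h⟩ | ⟨-, h⟩) <;> exact h
  have hYval : ∀ t, μ (Y ⁻¹' {t}) = Qr t := by
    intro t
    rw [hYsplit t, measure_union ?disj (hYmeas 1 t)]
    · rw [hJoint 0 t, hJoint 1 t, ← mul_add, hq01, mul_one]
    case disj =>
      rw [Set.disjoint_left]
      rintro ω ⟨h0, -⟩ ⟨h1, -⟩
      simp only [Set.mem_preimage, Set.mem_singleton_iff] at h0 h1
      rw [h0] at h1
      exact absurd h1 (by decide)
  -- Step 5 : sum over `t` equals 1.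
  have hYm : ∀ t, MeasurableSet (Y ⁻¹' {t}) := fun t => by
    rw [hYsplit t]; exact (hYmeas 0 t).union (hYmeas 1 t)
  have hsumQR : ∑ t : Fin (i - 2) → Fin 2, Qr t = 1 := by
    have hcover : ⋃ t : Fin (i - 2) → Fin 2, Y ⁻¹' {t} = Set.univ := by
      ext ω
      simp only [Set.mem_iUnion, Set.mem_preimage, Set.mem_singleton_iff, Set.mem_univ,
        iff_true]
      exact ⟨Y ω, rfl⟩
    have hdisjY : Pairwise (Function.onFun Disjoint (fun t => Y ⁻¹' {t})) := by
      intro t t' htt'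
      rw [Function.onFun, Set.disjoint_left]
      intro ω h1 h2
      simp only [Set.mem_preimage, Set.mem_singleton_iff] at h1 h2
      exact htt' (h1.symm.trans h2)
    calc ∑ t : Fin (i - 2) → Fin 2, Qr t
        = ∑ t : Fin (i - 2) → Fin 2, μ (Y ⁻¹' {t}) :=
          Finset.sum_congr rfl fun t _ => (hYval t).symm
      _ = ∑' t : Fin (i - 2) → Fin 2, μ (Y ⁻¹' {t}) := (tsum_fintype _).symm
      _ = μ (⋃ t : Fin (i - 2) → Fin 2, Y ⁻¹' {t}) := (measure_iUnion hdisjY hYm).symm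
      _ = 1 := by rw [hcover, measure_univ]
  -- Step 6 : real-number computations.
  have hQrtop : ∀ t, Qr t ≠ ⊤ := fun t => by
    rw [hQr]
    exact (ENNReal.prod_lt_top fun k hk =>
      (RecordAux.q_ne_top (by have := Finset.mem_Icc.mp hk; omega) _).lt_top).ne
  have hQrzero : ∀ t, Qr t ≠ 0 := fun t => by
    rw [hQr]
    exact Finset.prod_ne_zero_iff.mpr fun k hk =>
      RecordAux.q_ne_zero (Finset.mem_Icc.mp hk).1 _
  set A : Fin 2 → ℝ := fun s' => (RecordAux.q i s').toReal with hA
  set R : (Fin (i - 2) → Fin 2) → ℝ := fun t => (Qr t).toReal with hR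
  have hRsum : ∑ t : Fin (i - 2) → Fin 2, R t = 1 := by
    have h1 : (∑ t : Fin (i - 2) → Fin 2, Qr t).toReal
        = ∑ t : Fin (i - 2) → Fin 2, (Qr t).toReal :=
      ENNReal.toReal_sum (fun t _ => hQrtop t)
    rw [hR]
    rw [← h1, hsumQR]
    simp
  have hRpos : ∀ t, R t ≠ 0 := fun t =>
    ENNReal.toReal_ne_zero.mpr ⟨hQrzero t, hQrtop t⟩
  unfold condEntropy
  have hterm : ∀ (s : Fin 2) (t : Fin (i - 2) → Fin 2),
      (μ (recordInd η i ⁻¹' {s} ∩ Y ⁻¹' {t})).toReal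
        * Real.log ((μ (recordInd η i ⁻¹' {s} ∩ Y ⁻¹' {t})).toReal / (μ (Y ⁻¹' {t})).toReal)
        = R t * (A s * Real.log (A s)) := by
    intro s t
    rw [hJoint s t, hYval t, ENNReal.toReal_mul]
    show R t * A s * Real.log (R t * A s / R t) = R t * (A s * Real.log (A s))
    have hdiv : R t * A s / R t = A s := by
      rw [mul_comm, mul_div_assoc, div_self (hRpos t), mul_one]
    rw [hdiv, mul_assoc]
  have hsum1 : ∀ s : Fin 2, ∑ t : Fin (i - 2) → Fin 2,
      (μ (recordInd η i ⁻¹' {s} ∩ Y ⁻¹' {t})).toReal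
        * Real.log ((μ (recordInd η i ⁻¹' {s} ∩ Y ⁻¹' {t})).toReal / (μ (Y ⁻¹' {t})).toReal)
      = A s * Real.log (A s) := by
    intro s
    rw [Finset.sum_congr rfl fun t _ => hterm s t, ← Finset.sum_mul, hRsum, one_mul]
  rw [Finset.sum_congr rfl fun s _ => hsum1 s]
  -- Step 7 : final arithmetic.
  have hA0 : A 0 = ((i : ℝ) - 1) / (i : ℝ) := by
    show (RecordAux.q i 0).toReal = _
    unfold RecordAux.q
    rw [if_neg (by decide), ENNReal.toReal_div]
    simp only [ENNReal.toReal_natCast]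
    congr 1
    rw [Nat.cast_sub (by omega : 1 ≤ i), Nat.cast_one]
  have hA1 : A 1 = 1 / (i : ℝ) := by
    show (RecordAux.q i 1).toReal = _
    unfold RecordAux.q
    rw [if_pos rfl, ENNReal.toReal_div]
    simp
  have hpi : piFun (i - 1)
      = -(((i : ℝ) - 1) / (i : ℝ) * Real.log (((i : ℝ) - 1) / (i : ℝ)))
        - (1 / (i : ℝ)) * Real.log (1 / (i : ℝ)) := by
    unfold piFun
    have h1 : ((i - 1 : ℕ) : ℝ) = (i : ℝ) - 1 := by
      rw [Nat.cast_sub (by omega : 1 ≤ i), Nat.cast_one]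
    rw [h1, sub_add_cancel]
  rw [hpi, Fin.sum_univ_two, hA0, hA1]
  ring
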